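/- Let A be a finite-dimensional algebra over F with anisotropic multiplicative norm N of degree n, c ∈ A nonzero, and f, g similarities of N with factors α, β. Define x∘y = xy − (f(x)c)g(y). If N(c) ≠ 1/(αβ), then (A,∘) is a division algebra. -/
import Mathlib


/-- Albert-type twist `x∘y = xy − (f(x)c)g(y)`: if `N(c) ≠ 1/(αβ)` then `(A,∘)`
is a division algebra (no zero divisors). -/
theorem stmt_1 (F : Type*) [Field F] (A : Type*) [AddCommGroup A] [Module F A]
    [FiniteDimensional F A]
    (mul : A →ₗ[F] A →ₗ[F] A) (N : A → F)
    (hNmul : ∀ x y : A, N (mul x y) = N x * N y)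
    (hNaniso : ∀ x : A, N x = 0 → x = 0)
    (c : A) (hc : c ≠ 0)
    (f g : A →ₗ[F] A) (α β : F) (hα : α ≠ 0) (hβ : β ≠ 0)
    (hf : ∀ x : A, N (f x) = α * N x) (hg : ∀ x : A, N (g x) = β * N x)
    (hNc : N c ≠ (α * β)⁻¹) :
    ∀ x y : A, mul x y - mul (mul (f x) c) (g y) = 0 → x = 0 ∨ y = 0 := by
  intro x y h
  by_contra hcon
  push_neg at hcon
  obtain ⟨hx, hy⟩ := hcon
  have hNx : N x ≠ 0 := fun h0 => hx (hNaniso x h0)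
  have hNy : N y ≠ 0 := fun h0 => hy (hNaniso y h0)
  have heq : mul x y = mul (mul (f x) c) (g y) := sub_eq_zero.mp h
  have h1 := hNmul x y
  rw [heq, hNmul, hNmul, hf, hg] at h1
  have h2 : α * β * N c = 1 :=
    mul_left_cancel₀ (mul_ne_zero hNx hNy) (by linear_combination h1)
  exact hNc (eq_inv_of_mul_eq_one_right h2)
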